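/- Let a > 0, A ≥ 1, λ ∈ ℂ∖{0}, and let f ∈ C¹[0,A] satisfy f(x) = 1 + (λ x^{a+1}/B(a,a+1)) ∫₀^A y^{a-1} (x+y)^{-1-2a} f(y) dy for all x ∈ (0,A). Then for every x > 0, f′(x) = -λ f(A) A^a x^a / (B(a,a+1) (x+A)^{1+2a}) + (λ/B(a,a+1)) ∫₀^A (x/y)^a (1 + x/y)^{-1-2a} f′(y) dy/y. -/

import Mathlib

open MeasureTheory Set

/-- The Euler Beta function `B(p,q) = Γ(p)Γ(q)/Γ(p+q)` for real arguments. -/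
noncomputable def betaR (p q : ℝ) : ℝ := Real.Gamma p * Real.Gamma q / Real.Gamma (p + q)

noncomputable def dixK (a t y : ℝ) : ℝ := t ^ (a+1) * (y ^ (a-1) * (t+y) ^ (-(1+2*a)))
noncomputable def dixKt (a t y : ℝ) : ℝ :=
  (a+1) * t ^ a * (y ^ (a-1) * (t+y) ^ (-(1+2*a)))
    + t ^ (a+1) * (y ^ (a-1) * (-(1+2*a) * (t+y) ^ (-(1+2*a)-1)))
noncomputable def dixG (a t y : ℝ) : ℝ := t ^ a * (y ^ a * (t+y) ^ (-(1+2*a)))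
noncomputable def dixGy (a t y : ℝ) : ℝ :=
  t ^ a * (a * y ^ (a-1) * (t+y) ^ (-(1+2*a)) + y ^ a * (-(1+2*a) * (t+y) ^ (-(1+2*a)-1)))

lemma dixK_hasDeriv {a t y : ℝ} (ht : 0 < t) (hy : 0 < y) :
    HasDerivAt (fun s => dixK a s y) (dixKt a t y) t := by
  have h2 : HasDerivAt (fun s : ℝ => (s + y) ^ (-(1+2*a)))
      (-(1+2*a) * (t+y) ^ (-(1+2*a)-1)) t := by
    have := (Real.hasDerivAt_rpow_const (p := -(1+2*a))
      (Or.inl (add_pos ht hy).ne')).comp t ((hasDerivAt_id t).add_const y)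
    simpa [Function.comp_def] using this
  have h1 : HasDerivAt (fun s : ℝ => s ^ (a+1)) ((a+1) * t ^ a) t := by
    have := Real.hasDerivAt_rpow_const (x := t) (p := a+1) (Or.inl ht.ne')
    simpa using this
  have := h1.fun_mul (h2.const_mul (y ^ (a-1)))
  simpa [dixK, dixKt, mul_comm, mul_left_comm, mul_assoc] using this

lemma dixG_hasDeriv {a t y : ℝ} (ht : 0 < t) (hy : 0 < y) :
    HasDerivAt (fun z => dixG a t z) (dixGy a t y) y := by
  have h2 : HasDerivAt (fun z : ℝ => (t + z) ^ (-(1+2*a)))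
      (-(1+2*a) * (t+y) ^ (-(1+2*a)-1)) y := by
    have := (Real.hasDerivAt_rpow_const (p := -(1+2*a))
      (Or.inl (add_pos ht hy).ne')).comp y ((hasDerivAt_id y).const_add t)
    simpa [Function.comp_def] using this
  have h1 : HasDerivAt (fun z : ℝ => z ^ a) (a * y ^ (a-1)) y :=
    Real.hasDerivAt_rpow_const (Or.inl hy.ne')
  have := (h1.mul h2).const_mul (t ^ a)
  simpa [dixG, dixGy, mul_comm, mul_left_comm, mul_assoc] using this

lemma dix_key {a t y : ℝ} (ht : 0 < t) (hy : 0 < y) : dixKt a t y = -dixGy a t y := by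
  have hty : (0:ℝ) < t + y := add_pos ht hy
  have e1 : t ^ (a+1) = t ^ a * t := by rw [Real.rpow_add ht, Real.rpow_one]
  have e2 : y ^ a = y ^ (a-1) * y := by
    nth_rewrite 1 [show a = (a-1)+1 by ring]
    rw [Real.rpow_add_one hy.ne']
  have e3 : (t+y) ^ (-(1+2*a)-1) = (t+y) ^ (-(1+2*a)) * (t+y)⁻¹ := by
    rw [show -(1+2*a)-1 = -(1+2*a) + (-1) by ring, Real.rpow_add hty, Real.rpow_neg_one]
  simp only [dixKt, dixGy, e1, e2, e3]
  field_simp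
  ring

private lemma mul4_le {c u v u' v' : ℝ} (hc : 0 ≤ c) (hu : u ≤ u') (hv : v ≤ v')
    (hv0 : 0 ≤ v) (hu0 : 0 ≤ u') : c * (u * v) ≤ c * (u' * v') :=
  mul_le_mul_of_nonneg_left (mul_le_mul hu hv hv0 hu0) hc

lemma dixK_bound {a x y : ℝ} (ha : 0 < a) (hx : 0 < x) (hy : 0 < y) :
    |dixK a x y| ≤ (x ^ (a+1) * x ^ (-(1+2*a))) * y ^ (a-1) := by
  have hty : (0:ℝ) < x + y := by linarith
  have e : |dixK a x y| = dixK a x y := abs_of_nonneg (mul_nonneg (Real.rpow_nonneg hx.le _)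
    (mul_nonneg (Real.rpow_nonneg hy.le _) (Real.rpow_nonneg hty.le _)))
  rw [e, dixK]
  calc x ^ (a+1) * (y ^ (a-1) * (x+y) ^ (-(1+2*a)))
      = (x ^ (a+1) * y ^ (a-1)) * ((x+y) ^ (-(1+2*a))) := by ring
    _ ≤ (x ^ (a+1) * y ^ (a-1)) * (x ^ (-(1+2*a))) :=
        mul_le_mul_of_nonneg_left
          (Real.rpow_le_rpow_of_nonpos hx (by linarith) (by linarith))
          (mul_nonneg (Real.rpow_nonneg hx.le _) (Real.rpow_nonneg hy.le _))
    _ = _ := by ring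

lemma dixKt_bound {a x t y : ℝ} (ha : 0 < a) (hx : 0 < x) (ht1 : x/2 ≤ t)
    (ht2 : t ≤ 2*x) (hy : 0 < y) :
    |dixKt a t y| ≤ ((a+1)*(2*x)^a*(x/2)^(-(1+2*a))
      + (2*x)^(a+1)*((1+2*a)*(x/2)^(-(1+2*a)-1))) * y ^ (a-1) := by
  have ht0 : (0:ℝ) < t := lt_of_lt_of_le (by linarith) ht1
  have hty : (0:ℝ) < t + y := by linarith
  have h12a : (0:ℝ) ≤ 1+2*a := by linarith
  have h2x : (0:ℝ) ≤ 2*x := by linarith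
  have hb1 : t ^ a ≤ (2*x) ^ a := Real.rpow_le_rpow ht0.le ht2 ha.le
  have hb1' : t ^ (a+1) ≤ (2*x) ^ (a+1) := Real.rpow_le_rpow ht0.le ht2 (by linarith)
  have hb2 : (t+y) ^ (-(1+2*a)) ≤ (x/2) ^ (-(1+2*a)) :=
    Real.rpow_le_rpow_of_nonpos (by linarith) (by linarith) (by linarith)
  have hb3 : (t+y) ^ (-(1+2*a)-1) ≤ (x/2) ^ (-(1+2*a)-1) :=
    Real.rpow_le_rpow_of_nonpos (by linarith) (by linarith) (by linarith)
  have habs : |dixKt a t y| ≤ (a+1) * t ^ a * (y ^ (a-1) * (t+y) ^ (-(1+2*a)))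
      + t ^ (a+1) * (y ^ (a-1) * ((1+2*a) * (t+y) ^ (-(1+2*a)-1))) := by
    refine (abs_add_le _ _).trans ?_
    have e1 : |(a+1) * t ^ a * (y ^ (a-1) * (t+y) ^ (-(1+2*a)))|
        = (a+1) * t ^ a * (y ^ (a-1) * (t+y) ^ (-(1+2*a))) :=
      abs_of_nonneg (mul_nonneg (mul_nonneg (by linarith) (Real.rpow_nonneg ht0.le _))
        (mul_nonneg (Real.rpow_nonneg hy.le _) (Real.rpow_nonneg hty.le _)))
    have e2 : |t ^ (a+1) * (y ^ (a-1) * (-(1+2*a) * (t+y) ^ (-(1+2*a)-1)))|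
        = t ^ (a+1) * (y ^ (a-1) * ((1+2*a) * (t+y) ^ (-(1+2*a)-1))) := by
      rw [show t ^ (a+1) * (y ^ (a-1) * (-(1+2*a) * (t+y) ^ (-(1+2*a)-1)))
        = -(t ^ (a+1) * (y ^ (a-1) * ((1+2*a) * (t+y) ^ (-(1+2*a)-1)))) by ring, abs_neg]
      exact abs_of_nonneg (mul_nonneg (Real.rpow_nonneg ht0.le _)
        (mul_nonneg (Real.rpow_nonneg hy.le _)
          (mul_nonneg h12a (Real.rpow_nonneg hty.le _))))
    rw [e1, e2]
  refine habs.trans ?_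
  have g1 : (a+1) * t ^ a * (y ^ (a-1) * (t+y) ^ (-(1+2*a)))
      ≤ (a+1) * y ^ (a-1) * ((2*x) ^ a * (x/2) ^ (-(1+2*a))) := by
    calc (a+1) * t ^ a * (y ^ (a-1) * (t+y) ^ (-(1+2*a)))
        = ((a+1) * y ^ (a-1)) * (t ^ a * (t+y) ^ (-(1+2*a))) := by ring
      _ ≤ ((a+1) * y ^ (a-1)) * ((2*x) ^ a * (x/2) ^ (-(1+2*a))) :=
          mul4_le (mul_nonneg (by linarith) (Real.rpow_nonneg hy.le _)) hb1 hb2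
            (Real.rpow_nonneg hty.le _) (Real.rpow_nonneg h2x _)
      _ = _ := by ring
  have g2 : t ^ (a+1) * (y ^ (a-1) * ((1+2*a) * (t+y) ^ (-(1+2*a)-1)))
      ≤ (1+2*a) * y ^ (a-1) * ((2*x) ^ (a+1) * (x/2) ^ (-(1+2*a)-1)) := by
    calc t ^ (a+1) * (y ^ (a-1) * ((1+2*a) * (t+y) ^ (-(1+2*a)-1)))
        = ((1+2*a) * y ^ (a-1)) * (t ^ (a+1) * (t+y) ^ (-(1+2*a)-1)) := by ring
      _ ≤ ((1+2*a) * y ^ (a-1)) * ((2*x) ^ (a+1) * (x/2) ^ (-(1+2*a)-1)) :=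
          mul4_le (mul_nonneg h12a (Real.rpow_nonneg hy.le _)) hb1' hb3
            (Real.rpow_nonneg hty.le _) (Real.rpow_nonneg h2x _)
      _ = _ := by ring
  calc _ ≤ (a+1) * y ^ (a-1) * ((2*x) ^ a * (x/2) ^ (-(1+2*a)))
      + (1+2*a) * y ^ (a-1) * ((2*x) ^ (a+1) * (x/2) ^ (-(1+2*a)-1)) := add_le_add g1 g2
    _ = _ := by ring

lemma dixG_bound {a x A y : ℝ} (ha : 0 < a) (hx : 0 < x) (hy : 0 ≤ y) (hyA : y ≤ A) :
    |dixG a x y| ≤ x ^ a * (A ^ a * x ^ (-(1+2*a))) := by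
  have hty : (0:ℝ) < x + y := by linarith
  have e : |dixG a x y| = dixG a x y := abs_of_nonneg (mul_nonneg (Real.rpow_nonneg hx.le _)
    (mul_nonneg (Real.rpow_nonneg hy _) (Real.rpow_nonneg hty.le _)))
  rw [e, dixG]
  exact mul4_le (Real.rpow_nonneg hx.le _) (Real.rpow_le_rpow hy hyA ha.le)
    (Real.rpow_le_rpow_of_nonpos hx (by linarith) (by linarith))
    (Real.rpow_nonneg hty.le _) (Real.rpow_nonneg (le_trans hy hyA) _)

lemma dixGy_bound {a x A y : ℝ} (ha : 0 < a) (hx : 0 < x) (hy : 0 < y) (hyA : y ≤ A) :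
    |dixGy a x y| ≤ (x ^ a * (a * x ^ (-(1+2*a)))) * y ^ (a-1)
      + x ^ a * (A ^ a * ((1+2*a) * x ^ (-(1+2*a)-1))) := by
  have hty : (0:ℝ) < x + y := by linarith
  have h12a : (0:ℝ) ≤ 1+2*a := by linarith
  have hA0 : (0:ℝ) ≤ A := le_trans hy.le hyA
  have hb2 : (x+y) ^ (-(1+2*a)) ≤ x ^ (-(1+2*a)) :=
    Real.rpow_le_rpow_of_nonpos hx (by linarith) (by linarith)
  have hb3 : (x+y) ^ (-(1+2*a)-1) ≤ x ^ (-(1+2*a)-1) :=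
    Real.rpow_le_rpow_of_nonpos hx (by linarith) (by linarith)
  have habs : |dixGy a x y| ≤ x ^ a * (a * y ^ (a-1) * (x+y) ^ (-(1+2*a)))
      + x ^ a * (y ^ a * ((1+2*a) * (x+y) ^ (-(1+2*a)-1))) := by
    rw [dixGy, mul_add]
    refine (abs_add_le _ _).trans ?_
    have e1 : |x ^ a * (a * y ^ (a-1) * (x+y) ^ (-(1+2*a)))|
        = x ^ a * (a * y ^ (a-1) * (x+y) ^ (-(1+2*a))) :=
      abs_of_nonneg (mul_nonneg (Real.rpow_nonneg hx.le _)
        (mul_nonneg (mul_nonneg ha.le (Real.rpow_nonneg hy.le _)) (Real.rpow_nonneg hty.le _)))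
    have e2 : |x ^ a * (y ^ a * (-(1+2*a) * (x+y) ^ (-(1+2*a)-1)))|
        = x ^ a * (y ^ a * ((1+2*a) * (x+y) ^ (-(1+2*a)-1))) := by
      rw [show x ^ a * (y ^ a * (-(1+2*a) * (x+y) ^ (-(1+2*a)-1)))
        = -(x ^ a * (y ^ a * ((1+2*a) * (x+y) ^ (-(1+2*a)-1)))) by ring, abs_neg]
      exact abs_of_nonneg (mul_nonneg (Real.rpow_nonneg hx.le _)
        (mul_nonneg (Real.rpow_nonneg hy.le _)
          (mul_nonneg h12a (Real.rpow_nonneg hty.le _))))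
    rw [e1, e2]
  refine habs.trans (add_le_add ?_ ?_)
  · calc x ^ a * (a * y ^ (a-1) * (x+y) ^ (-(1+2*a)))
        = (x ^ a * a * y ^ (a-1)) * ((x+y) ^ (-(1+2*a))) := by ring
      _ ≤ (x ^ a * a * y ^ (a-1)) * (x ^ (-(1+2*a))) :=
          mul_le_mul_of_nonneg_left hb2 (mul_nonneg
            (mul_nonneg (Real.rpow_nonneg hx.le _) ha.le) (Real.rpow_nonneg hy.le _))
      _ = (x ^ a * (a * x ^ (-(1+2*a)))) * y ^ (a-1) := by ring
  · calc x ^ a * (y ^ a * ((1+2*a) * (x+y) ^ (-(1+2*a)-1)))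
        = (x ^ a * (1+2*a)) * (y ^ a * (x+y) ^ (-(1+2*a)-1)) := by ring
      _ ≤ (x ^ a * (1+2*a)) * (A ^ a * x ^ (-(1+2*a)-1)) :=
          mul4_le (mul_nonneg (Real.rpow_nonneg hx.le _) h12a)
            (Real.rpow_le_rpow hy.le hyA ha.le) hb3
            (Real.rpow_nonneg hty.le _) (Real.rpow_nonneg hA0 _)
      _ = _ := by ring

lemma aux_rpow_int {a A : ℝ} (ha : 0 < a) (hA : 0 ≤ A) :
    IntegrableOn (fun y : ℝ => y ^ (a - 1)) (Ioc 0 A) := by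
  rw [← intervalIntegrable_iff_integrableOn_Ioc_of_le hA]
  exact intervalIntegral.intervalIntegrable_rpow' (by linarith)

lemma aux_bound_int {a A : ℝ} (ha : 0 < a) (hA : 0 ≤ A) (c d : ℝ) :
    IntegrableOn (fun y : ℝ => c * y ^ (a - 1) + d) (Ioc 0 A) :=
  ((aux_rpow_int ha hA).const_mul c).add (integrableOn_const measure_Ioc_lt_top.ne)

lemma aux_int_of_bound {a A : ℝ} (ha : 0 < a) (hA : 0 ≤ A) {g : ℝ → ℂ}
    (hg : AEStronglyMeasurable g (volume.restrict (Ioc 0 A))) {c d : ℝ}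
    (hbd : ∀ y ∈ Ioc (0:ℝ) A, ‖g y‖ ≤ c * y ^ (a - 1) + d) :
    IntegrableOn g (Ioc 0 A) :=
  Integrable.mono' (aux_bound_int ha hA c d) hg
    ((ae_restrict_iff' measurableSet_Ioc).2 (ae_of_all _ hbd))

lemma aux_cont_rpow {A : ℝ} (p : ℝ) : ContinuousOn (fun y : ℝ => y ^ p) (Ioc 0 A) :=
  fun y hy => (Real.continuousAt_rpow_const y p (Or.inl hy.1.ne')).continuousWithinAt

lemma aux_cont_shift {A t : ℝ} (ht : 0 < t) (p : ℝ) :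
    ContinuousOn (fun y : ℝ => (t + y) ^ p) (Ioc 0 A) := fun y hy =>
  ((Real.continuousAt_rpow_const (t + y) p (Or.inl (add_pos ht hy.1).ne')).comp
    (by fun_prop : ContinuousAt (fun y : ℝ => t + y) y)).continuousWithinAt

lemma aux_cont_rpow_Icc {A a : ℝ} (ha : 0 ≤ a) : ContinuousOn (fun y : ℝ => y ^ a) (Icc 0 A) :=
  fun y _ => (Real.continuousAt_rpow_const y a (Or.inr ha)).continuousWithinAt

lemma aux_cont_shift_Icc {A t : ℝ} (ht : 0 < t) (p : ℝ) :
    ContinuousOn (fun y : ℝ => (t + y) ^ p) (Icc 0 A) := fun y hy =>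
  ((Real.continuousAt_rpow_const (t + y) p
      (Or.inl (add_pos_of_pos_of_nonneg ht hy.1).ne')).comp
    (by fun_prop : ContinuousAt (fun y : ℝ => t + y) y)).continuousWithinAt

lemma dix_target_eq {a x y : ℝ} (ha : 0 < a) (hx : 0 < x) (hy : 0 < y) :
    (x/y) ^ a * (1 + x/y) ^ (-(1+2*a)) / y = dixG a x y := by
  have hxy : (0:ℝ) < x + y := by linarith
  have e0 : 1 + x/y = (x+y)/y := by field_simp; ring
  have e1 : ((x+y)/y) ^ (-(1+2*a)) = (x+y) ^ (-(1+2*a)) * y ^ (1+2*a) := by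
    rw [Real.div_rpow hxy.le hy.le, Real.rpow_neg hy.le, div_eq_mul_inv, inv_inv]
  have e2 : (x/y) ^ a = x ^ a * (y ^ a)⁻¹ := by
    rw [Real.div_rpow hx.le hy.le, div_eq_mul_inv]
  have e3 : y ^ (1+2*a) = y ^ a * y ^ a * y := by
    rw [show y ^ a * y ^ a * y = y ^ (a+a+1) by
      rw [← Real.rpow_add hy, ← Real.rpow_add_one hy.ne']]
    congr 1; ring
  have hya : y ^ a ≠ 0 := (Real.rpow_pos_of_pos hy a).ne'
  rw [e0, e1, e2, e3, dixG]
  field_simp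

/-- If `f ∈ C¹[0,A]` (with derivative `f'`) satisfies the generalized
Dixon equation on `(0,A)`, then for every `x ∈ (0,A)`,
`f'(x) = -λ f(A) A^a x^a/(B(a,a+1)(x+A)^(1+2a))
          + (λ/B(a,a+1)) ∫₀^A (x/y)^a (1+x/y)^(-1-2a) f'(y) dy/y`. -/
theorem dixon_derivative_equation (a A : ℝ) (ha : 0 < a) (hA : 1 ≤ A)
    (lam : ℂ) (hlam : lam ≠ 0) (f f' : ℝ → ℂ)
    (hf : ContinuousOn f (Icc 0 A)) (hf' : ContinuousOn f' (Icc 0 A))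
    (hderiv : ∀ x ∈ Ioo (0:ℝ) A, HasDerivAt f (f' x) x)
    (heq : ∀ x ∈ Ioo (0:ℝ) A,
      f x = 1 + lam * ((x ^ (a + 1) / betaR a (a + 1) : ℝ) : ℂ) *
        ∫ y in Ioc (0:ℝ) A, ((y ^ (a - 1) * (x + y) ^ (-(1 + 2 * a)) : ℝ) : ℂ) * f y) :
    ∀ x ∈ Ioo (0:ℝ) A,
      f' x = -(lam * f A *
          ((A ^ a * x ^ a / (betaR a (a + 1) * (x + A) ^ (1 + 2 * a)) : ℝ) : ℂ))
        + (lam / (betaR a (a + 1) : ℝ)) *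
          ∫ y in Ioc (0:ℝ) A,
            (((x / y) ^ a * (1 + x / y) ^ (-(1 + 2 * a)) / y : ℝ) : ℂ) * f' y := by
  intro x hx
  obtain ⟨hx0, hxA⟩ := hx
  have hA0 : (0:ℝ) ≤ A := by linarith
  have h12a : (0:ℝ) ≤ 1 + 2*a := by linarith
  set B : ℝ := betaR a (a+1) with hB
  -- bounds on f and f'
  obtain ⟨M, hM⟩ := isCompact_Icc.exists_bound_of_continuousOn hf
  obtain ⟨M', hM'⟩ := isCompact_Icc.exists_bound_of_continuousOn hf'
  have hM0 : 0 ≤ M := le_trans (norm_nonneg _) (hM 0 ⟨le_refl _, hA0⟩)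
  have hM'0 : 0 ≤ M' := le_trans (norm_nonneg _) (hM' 0 ⟨le_refl _, hA0⟩)
  have hIocIcc : Ioc (0:ℝ) A ⊆ Icc 0 A := Ioc_subset_Icc_self
  -- measurability facts
  have measK : ∀ t : ℝ, 0 < t →
      AEStronglyMeasurable (fun y => ((dixK a t y : ℝ) : ℂ) * f y)
        (volume.restrict (Ioc 0 A)) := by
    intro t ht
    refine ContinuousOn.aestronglyMeasurable ?_ measurableSet_Ioc
    exact ((Complex.continuous_ofReal.comp_continuousOn
      (continuousOn_const.mul ((aux_cont_rpow _).mul (aux_cont_shift ht _))))).mul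
      (hf.mono hIocIcc)
  have measKt : AEStronglyMeasurable (fun y => ((dixKt a x y : ℝ) : ℂ) * f y)
      (volume.restrict (Ioc 0 A)) := by
    refine ContinuousOn.aestronglyMeasurable ?_ measurableSet_Ioc
    refine (Complex.continuous_ofReal.comp_continuousOn ?_).mul (hf.mono hIocIcc)
    exact (continuousOn_const.mul ((aux_cont_rpow _).mul (aux_cont_shift hx0 _))).add
      (continuousOn_const.mul ((aux_cont_rpow _).mul
        (continuousOn_const.mul (aux_cont_shift hx0 _))))
  have contGy : ContinuousOn (fun y : ℝ => dixGy a x y) (Ioc 0 A) := by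
    exact continuousOn_const.mul
      (((continuousOn_const.mul (aux_cont_rpow _)).mul (aux_cont_shift hx0 _)).add
        ((aux_cont_rpow _).mul (continuousOn_const.mul (aux_cont_shift hx0 _))))
  have contG : ContinuousOn (fun y : ℝ => dixG a x y) (Icc 0 A) :=
    continuousOn_const.mul ((aux_cont_rpow_Icc ha.le).mul (aux_cont_shift_Icc hx0 _))
  have measGyf : AEStronglyMeasurable (fun y => ((dixGy a x y : ℝ) : ℂ) * f y)
      (volume.restrict (Ioc 0 A)) :=
    ContinuousOn.aestronglyMeasurable
      ((Complex.continuous_ofReal.comp_continuousOn contGy).mul (hf.mono hIocIcc))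
      measurableSet_Ioc
  have measGf' : AEStronglyMeasurable (fun y => ((dixG a x y : ℝ) : ℂ) * f' y)
      (volume.restrict (Ioc 0 A)) :=
    ContinuousOn.aestronglyMeasurable
      ((Complex.continuous_ofReal.comp_continuousOn (contG.mono hIocIcc)).mul
        (hf'.mono hIocIcc))
      measurableSet_Ioc
  -- integrability of the three main integrands
  have intGyf : IntegrableOn (fun y => ((dixGy a x y : ℝ) : ℂ) * f y) (Ioc 0 A) := by
    refine aux_int_of_bound ha hA0 measGyf
      (c := (x ^ a * (a * x ^ (-(1+2*a)))) * M)
      (d := x ^ a * (A ^ a * ((1+2*a) * x ^ (-(1+2*a)-1))) * M) ?_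
    intro y hy
    have h1 := dixGy_bound (A := A) ha hx0 hy.1 hy.2
    have h2 := hM y (hIocIcc hy)
    calc ‖((dixGy a x y : ℝ) : ℂ) * f y‖ = |dixGy a x y| * ‖f y‖ := by
          rw [norm_mul, Complex.norm_real, Real.norm_eq_abs]
      _ ≤ ((x ^ a * (a * x ^ (-(1+2*a)))) * y ^ (a-1)
            + x ^ a * (A ^ a * ((1+2*a) * x ^ (-(1+2*a)-1)))) * M :=
          mul_le_mul h1 h2 (norm_nonneg _) (le_trans (abs_nonneg _) h1)
      _ = _ := by ring
  have intGf' : IntegrableOn (fun y => ((dixG a x y : ℝ) : ℂ) * f' y) (Ioc 0 A) := by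
    refine aux_int_of_bound ha hA0 measGf' (c := 0)
      (d := x ^ a * (A ^ a * x ^ (-(1+2*a))) * M') ?_
    intro y hy
    have h1 := dixG_bound (A := A) ha hx0 hy.1.le hy.2
    have h2 := hM' y (hIocIcc hy)
    calc ‖((dixG a x y : ℝ) : ℂ) * f' y‖ = |dixG a x y| * ‖f' y‖ := by
          rw [norm_mul, Complex.norm_real, Real.norm_eq_abs]
      _ ≤ (x ^ a * (A ^ a * x ^ (-(1+2*a)))) * M' :=
          mul_le_mul h1 h2 (norm_nonneg _) (le_trans (abs_nonneg _) h1)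
      _ = _ := by simp
  -- derivative of the parametrized integral
  set D : ℝ := (a+1)*(2*x)^a*(x/2)^(-(1+2*a)) + (2*x)^(a+1)*((1+2*a)*(x/2)^(-(1+2*a)-1))
    with hD
  have key := hasDerivAt_integral_of_dominated_loc_of_deriv_le
    (μ := volume.restrict (Ioc (0:ℝ) A)) (x₀ := x)
    (F := fun t y => ((dixK a t y : ℝ) : ℂ) * f y)
    (F' := fun t y => ((dixKt a t y : ℝ) : ℂ) * f y)
    (bound := fun y => (D * M) * y ^ (a-1))
    (Metric.ball_mem_nhds x (half_pos hx0))
    (by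
      filter_upwards [eventually_gt_nhds hx0] with t ht
      exact measK t ht)
    (by
      refine aux_int_of_bound ha hA0 (measK x hx0)
        (c := (x ^ (a+1) * x ^ (-(1+2*a))) * M) (d := 0) ?_
      intro y hy
      have h1 := dixK_bound ha hx0 hy.1
      have h2 := hM y (hIocIcc hy)
      calc ‖((dixK a x y : ℝ) : ℂ) * f y‖ = |dixK a x y| * ‖f y‖ := by
            rw [norm_mul, Complex.norm_real, Real.norm_eq_abs]
        _ ≤ ((x ^ (a+1) * x ^ (-(1+2*a))) * y ^ (a-1)) * M :=
            mul_le_mul h1 h2 (norm_nonneg _) (le_trans (abs_nonneg _) h1)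
        _ = _ := by ring)
    measKt
    (by
      refine (ae_restrict_iff' measurableSet_Ioc).2 (ae_of_all _ fun y hy => ?_)
      intro t ht
      rw [Metric.mem_ball, Real.dist_eq, abs_sub_lt_iff] at ht
      have h1 := dixKt_bound ha hx0 (by linarith [ht.2] : x/2 ≤ t)
        (by linarith [ht.1] : t ≤ 2*x) hy.1
      have h2 := hM y (hIocIcc hy)
      calc ‖((dixKt a t y : ℝ) : ℂ) * f y‖ = |dixKt a t y| * ‖f y‖ := by
            rw [norm_mul, Complex.norm_real, Real.norm_eq_abs]
        _ ≤ (D * y ^ (a-1)) * M :=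
            mul_le_mul h1 h2 (norm_nonneg _) (le_trans (abs_nonneg _) h1)
        _ = (D * M) * y ^ (a-1) := by ring)
    (by
      have := (aux_rpow_int ha hA0).const_mul (D * M)
      exact this)
    (by
      refine (ae_restrict_iff' measurableSet_Ioc).2 (ae_of_all _ fun y hy => ?_)
      intro t ht
      rw [Metric.mem_ball, Real.dist_eq, abs_sub_lt_iff] at ht
      have ht0 : 0 < t := by linarith [ht.2]
      exact ((dixK_hasDeriv ht0 hy.1).ofReal_comp).mul_const (f y))
  -- identify f' x with the derivative of the integral
  have hev : f =ᶠ[nhds x] fun t => 1 + (lam / (B : ℂ)) *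
      ∫ y in Ioc (0:ℝ) A, ((dixK a t y : ℝ) : ℂ) * f y := by
    filter_upwards [Ioo_mem_nhds hx0 hxA] with t ht
    have hsplit : ∫ y in Ioc (0:ℝ) A, ((dixK a t y : ℝ) : ℂ) * f y
        = ((t ^ (a+1) : ℝ) : ℂ) *
          ∫ y in Ioc (0:ℝ) A, ((y ^ (a-1) * (t+y) ^ (-(1+2*a)) : ℝ) : ℂ) * f y := by
      rw [← integral_const_mul]
      refine integral_congr_ae (ae_of_all _ fun y => ?_)
      simp only [dixK, Complex.ofReal_mul]
      ring
    rw [heq t ht, hsplit]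
    push_cast
    ring
  have hd2 : HasDerivAt f
      ((lam / (B : ℂ)) * ∫ y in Ioc (0:ℝ) A, ((dixKt a x y : ℝ) : ℂ) * f y) x :=
    (((key.2).const_mul (lam / (B:ℂ))).const_add 1).congr_of_eventuallyEq hev
  have hfx : f' x = (lam / (B : ℂ)) *
      ∫ y in Ioc (0:ℝ) A, ((dixKt a x y : ℝ) : ℂ) * f y :=
    (hderiv x ⟨hx0, hxA⟩).unique hd2
  -- rewrite the integrand via the key identity
  have hI1 : (∫ y in Ioc (0:ℝ) A, ((dixKt a x y : ℝ) : ℂ) * f y)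
      = -∫ y in Ioc (0:ℝ) A, ((dixGy a x y : ℝ) : ℂ) * f y := by
    rw [← integral_neg]
    refine setIntegral_congr_fun measurableSet_Ioc fun y hy => ?_
    rw [dix_key hx0 hy.1]
    push_cast
    ring
  -- integration by parts
  have hphi0 : ((dixG a x 0 : ℝ) : ℂ) * f 0 = 0 := by
    simp [dixG, Real.zero_rpow ha.ne']
  have contphi : ContinuousOn (fun y => ((dixG a x y : ℝ) : ℂ) * f y) (Icc 0 A) :=
    (Complex.continuous_ofReal.comp_continuousOn contG).mul hf
  have derivphi : ∀ y ∈ Ioo (0:ℝ) A,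
      HasDerivAt (fun y => ((dixG a x y : ℝ) : ℂ) * f y)
        (((dixGy a x y : ℝ) : ℂ) * f y + ((dixG a x y : ℝ) : ℂ) * f' y) y :=
    fun y hy => ((dixG_hasDeriv hx0 hy.1).ofReal_comp).mul (hderiv y hy)
  have intphi' : IntervalIntegrable
      (fun y => ((dixGy a x y : ℝ) : ℂ) * f y + ((dixG a x y : ℝ) : ℂ) * f' y)
      volume 0 A := by
    rw [intervalIntegrable_iff_integrableOn_Ioc_of_le hA0]
    exact intGyf.add intGf'
  have ftc := intervalIntegral.integral_eq_sub_of_hasDerivAt_of_le hA0 contphi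
    derivphi intphi'
  rw [intervalIntegral.integral_of_le hA0, hphi0, sub_zero] at ftc
  have hsplit2 : ∫ y in Ioc (0:ℝ) A,
      (((dixGy a x y : ℝ) : ℂ) * f y + ((dixG a x y : ℝ) : ℂ) * f' y)
      = (∫ y in Ioc (0:ℝ) A, ((dixGy a x y : ℝ) : ℂ) * f y)
        + ∫ y in Ioc (0:ℝ) A, ((dixG a x y : ℝ) : ℂ) * f' y :=
    integral_add intGyf intGf'
  rw [hsplit2] at ftc
  -- rewrite target integral
  have htarget : (∫ y in Ioc (0:ℝ) A,
        (((x / y) ^ a * (1 + x / y) ^ (-(1 + 2 * a)) / y : ℝ) : ℂ) * f' y)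
      = ∫ y in Ioc (0:ℝ) A, ((dixG a x y : ℝ) : ℂ) * f' y := by
    refine setIntegral_congr_fun measurableSet_Ioc fun y hy => ?_
    rw [dix_target_eq ha hx0 hy.1]
  -- final assembly
  have hGA : (A ^ a * x ^ a / (B * (x + A) ^ (1 + 2 * a)) : ℝ) = dixG a x A / B := by
    rw [dixG, Real.rpow_neg (by linarith : (0:ℝ) ≤ x + A)]
    ring
  rw [hfx, hI1, htarget, hGA]
  have : (∫ y in Ioc (0:ℝ) A, ((dixGy a x y : ℝ) : ℂ) * f y)
      = ((dixG a x A : ℝ) : ℂ) * f A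
        - ∫ y in Ioc (0:ℝ) A, ((dixG a x y : ℝ) : ℂ) * f' y := by
    rw [← ftc]; ring
  rw [this]
  push_cast
  ring
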